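/- Let h be a nonzero complex number and R = ℂ[x₁,x₄]/(x₁², x₄² − x₁x₄), with x₂ = x₄ − x₁. For an integer k set c_k = (∏_{m=1}^{k} (x₂ + m·h))^{-1} if k ≥ 0 and c_k = ∏_{m=k+1}^{0} (x₂ + m·h) if k < 0. For integers e, d ≥ 0 set a_{e,d} = (∏_{m=1}^{e} (x₁ + m·h))^{-2} · (∏_{m=1}^{d} (x₄ + m·h))^{-1} · c_{d−e} ∈ R, and a_{e,d} = 0 if e < 0 or d < 0. Let J = ∑_{e,d≥0} a_{e,d} r₁^{e} r₂^{d} ∈ R[[r₁,r₂]], and let E₁, E₂ : R[[r₁,r₂]] → R[[r₁,r₂]] be the ℂ-linear operators multiplying the coefficient of r₁^{e} r₂^{d} by (x₁ + e·h) and by (x₄ + d·h) respectively. Then E₁²J = r₁·(E₂J) − r₁·(E₁J); equivalently, for all e ≥ 1 and d ≥ 0, a_{e,d}·(x₁ + eh)² = a_{e−1,d}·((x₄ + dh) − (x₁ + (e−1)h)) = a_{e−1,d}·(x₂ + (d−e+1)h). This is the second quantum differential equation D₂J = 0 of the Hirzebruch surface Σ₁, where D₂ = h²∂₁² − r₁h∂₂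 + r₁h∂₁. -/

import Mathlib

/-- The cohomology ring `H^*(Σ₁;ℂ) = ℂ[x₁,x₄]/(x₁², x₄² − x₁x₄)` of the Hirzebruch
surface `Σ₁ = P(O(0) ⊕ O(−1))`. -/
noncomputable abbrev HirzCohomology : Type :=
  MvPolynomial (Fin 2) ℂ ⧸ Ideal.span
    {(MvPolynomial.X 0 : MvPolynomial (Fin 2) ℂ) ^ 2,
      (MvPolynomial.X 1 : MvPolynomial (Fin 2) ℂ) ^ 2 - MvPolynomial.X 0 * MvPolynomial.X 1}

/-- The degree-two generator `x₁`. -/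
noncomputable abbrev hirzX1 : HirzCohomology :=
  Ideal.Quotient.mk _ (MvPolynomial.X 0)

/-- The degree-two generator `x₄`. -/
noncomputable abbrev hirzX4 : HirzCohomology :=
  Ideal.Quotient.mk _ (MvPolynomial.X 1)

/-- The class `x₂ = x₄ − x₁`. -/
noncomputable abbrev hirzX2 : HirzCohomology := hirzX4 - hirzX1


lemma hirzX1_sq : hirzX1 ^ 2 = 0 := by
  rw [← map_pow, Ideal.Quotient.eq_zero_iff_mem]
  exact Ideal.subset_span (Set.mem_insert _ _)

lemma hirzX4_sq : hirzX4 ^ 2 = hirzX1 * hirzX4 := by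
  rw [← sub_eq_zero, ← map_pow, ← map_mul, ← map_sub, Ideal.Quotient.eq_zero_iff_mem]
  exact Ideal.subset_span (Set.mem_insert_iff.mpr (Or.inr rfl))

lemma hirzX1_nilpotent : IsNilpotent hirzX1 := ⟨2, hirzX1_sq⟩

lemma hirzX4_nilpotent : IsNilpotent hirzX4 :=
  ⟨3, by
    rw [pow_succ, hirzX4_sq, mul_assoc, ← sq, hirzX4_sq, ← mul_assoc, ← sq, hirzX1_sq, zero_mul]⟩

lemma hirzX2_nilpotent : IsNilpotent hirzX2 :=
  (Commute.all _ _).isNilpotent_sub hirzX4_nilpotent hirzX1_nilpotent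

lemma hirz_unit {r : HirzCohomology} (hr : IsNilpotent r) {z : ℂ} (hz : z ≠ 0) :
    IsUnit (r + algebraMap ℂ HirzCohomology z) :=
  hr.isUnit_add_right_of_commute
    ((isUnit_iff_ne_zero.mpr hz).map (algebraMap ℂ HirzCohomology)) (Commute.all _ _)

set_option maxHeartbeats 2000000 in
theorem stmt_11 (h : ℂ) (hh : h ≠ 0)
    -- the factors `c_k`
    (c : ℤ → HirzCohomology)
    (hc1 : ∀ k : ℤ, 0 ≤ k → c k =
      Ring.inverse (∏ m ∈ Finset.Icc (1 : ℤ) k,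
        (hirzX2 + algebraMap ℂ HirzCohomology ((m : ℂ) * h))))
    (hc2 : ∀ k : ℤ, k < 0 → c k =
      ∏ m ∈ Finset.Icc (k + 1) (0 : ℤ),
        (hirzX2 + algebraMap ℂ HirzCohomology ((m : ℂ) * h)))
    -- the coefficients `a_{e,d}`, extended by zero to negative indices
    (A : ℤ → ℤ → HirzCohomology)
    (hA : ∀ e d : ℕ, A e d =
      Ring.inverse (∏ k ∈ Finset.range e,
          (hirzX1 + algebraMap ℂ HirzCohomology (((k : ℂ) + 1) * h))) ^ 2 *
        Ring.inverse (∏ k ∈ Finset.range d,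
          (hirzX4 + algebraMap ℂ HirzCohomology (((k : ℂ) + 1) * h))) *
        c ((d : ℤ) - (e : ℤ)))
    (hA0 : ∀ e d : ℤ, e < 0 ∨ d < 0 → A e d = 0)
    -- `J = ∑ a_{e,d} r₁^{e} r₂^{d}`
    (J : MvPowerSeries (Fin 2) HirzCohomology)
    (hJ : ∀ s : Fin 2 →₀ ℕ, MvPowerSeries.coeff s J = A (s 0) (s 1))
    -- the operators `E₁`, `E₂` multiplying the coefficient of `r₁^{e} r₂^{d}`
    -- by `x₁ + e·h` and `x₄ + d·h` respectively
    (E1 E2 : MvPowerSeries (Fin 2) HirzCohomology → MvPowerSeries (Fin 2) HirzCohomology)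
    (hE1 : ∀ F s, MvPowerSeries.coeff s (E1 F) =
      (hirzX1 + algebraMap ℂ HirzCohomology ((s 0 : ℂ) * h)) *
        MvPowerSeries.coeff s F)
    (hE2 : ∀ F s, MvPowerSeries.coeff s (E2 F) =
      (hirzX4 + algebraMap ℂ HirzCohomology ((s 1 : ℂ) * h)) *
        MvPowerSeries.coeff s F) :
    -- `E₁² J = r₁ (E₂ J) − r₁ (E₁ J)`
    E1 (E1 J) = MvPowerSeries.X 0 * E2 J - MvPowerSeries.X 0 * E1 J ∧
    -- equivalently, the coefficient recursion
    ∀ e d : ℤ, 1 ≤ e → 0 ≤ d →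
      A e d * (hirzX1 + algebraMap ℂ HirzCohomology ((e : ℂ) * h)) ^ 2
        = A (e - 1) d *
            ((hirzX4 + algebraMap ℂ HirzCohomology ((d : ℂ) * h))
              - (hirzX1 + algebraMap ℂ HirzCohomology (((e : ℂ) - 1) * h))) ∧
      A (e - 1) d *
          ((hirzX4 + algebraMap ℂ HirzCohomology ((d : ℂ) * h))
            - (hirzX1 + algebraMap ℂ HirzCohomology (((e : ℂ) - 1) * h)))
        = A (e - 1) d *
            (hirzX2 + algebraMap ℂ HirzCohomology (((d : ℂ) - (e : ℂ) + 1) * h)) := by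
  
  -- units of the x₂-type factors
  have hu2 : ∀ m : ℤ, m ≠ 0 →
      IsUnit (hirzX2 + algebraMap ℂ HirzCohomology ((m : ℂ) * h)) := fun m hm =>
    hirz_unit hirzX2_nilpotent (mul_ne_zero (Int.cast_ne_zero.mpr hm) hh)
  -- the one-step recursion for the factors `c`
  have hcstep : ∀ k : ℤ,
      c k = c (k + 1) * (hirzX2 + algebraMap ℂ HirzCohomology (((k : ℂ) + 1) * h)) := by
    intro k
    rcases lt_trichotomy k (-1) with hk | hk | hk
    · rw [hc2 k (by omega), hc2 (k + 1) (by omega)]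
      have hins : Finset.Icc (k + 1) (0 : ℤ) = insert (k + 1) (Finset.Icc (k + 1 + 1) 0) := by
        ext m; simp only [Finset.mem_Icc, Finset.mem_insert]; omega
      rw [hins, Finset.prod_insert (by simp)]
      push_cast
      ring
    · subst hk
      rw [hc2 (-1) (by omega), show (-1 : ℤ) + 1 = 0 from rfl, hc1 0 le_rfl]
      norm_num
    · rw [hc1 k (by omega), hc1 (k + 1) (by omega)]
      have hins : Finset.Icc (1 : ℤ) (k + 1) = insert (k + 1) (Finset.Icc 1 k) := by
        ext m; simp only [Finset.mem_Icc, Finset.mem_insert]; omega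
      rw [hins, Finset.prod_insert (by simp)]
      have ht := hu2 (k + 1) (by omega)
      push_cast at ht ⊢
      rw [Ring.mul_inverse_rev, mul_assoc, Ring.inverse_mul_cancel _ ht, mul_one]
  -- the coefficient recursion, natural-number form
  have key : ∀ m d : ℕ,
      A (↑(m + 1) : ℤ) d * (hirzX1 + algebraMap ℂ HirzCohomology (((m : ℂ) + 1) * h)) ^ 2
        = A m d * (hirzX2 + algebraMap ℂ HirzCohomology (((d : ℂ) - (m : ℂ)) * h)) := by
    intro m d
    have h2 := hcstep ((d : ℤ) - (m + 1))
    rw [hA (m + 1) d, hA m d, Finset.prod_range_succ,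
      show ((m + 1 : ℕ) : ℤ) = (m : ℤ) + 1 by push_cast; ring]
    rw [show (d : ℤ) - ((m : ℤ) + 1) + 1 = (d : ℤ) - m by ring,
      show ((((d : ℤ) - ((m : ℤ) + 1) : ℤ) : ℂ) + 1) * h = ((d : ℂ) - (m : ℂ)) * h by
        push_cast; ring] at h2
    set u := hirzX1 + algebraMap ℂ HirzCohomology (((m : ℂ) + 1) * h) with hu
    have huu : IsUnit u :=
      hirz_unit hirzX1_nilpotent (mul_ne_zero (Nat.cast_add_one_ne_zero m) hh)
    set P := ∏ k ∈ Finset.range m,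
      (hirzX1 + algebraMap ℂ HirzCohomology (((k : ℂ) + 1) * h)) with hP
    set Q := ∏ k ∈ Finset.range d,
      (hirzX4 + algebraMap ℂ HirzCohomology (((k : ℂ) + 1) * h)) with hQ
    have h1 : Ring.inverse (P * u) * u = Ring.inverse P := by
      rw [Ring.mul_inverse_rev, mul_comm (Ring.inverse u), mul_assoc,
        Ring.inverse_mul_cancel _ huu, mul_one]
    rw [h2]
    linear_combination (Ring.inverse (P * u) * u + Ring.inverse P) * Ring.inverse Q *
      c ((d : ℤ) - m) * (hirzX2 + algebraMap ℂ HirzCohomology (((d : ℂ) - m) * h)) * h1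
  -- the coefficient recursion, integer form (the second conjunct)
  have keyInt : ∀ e d : ℤ, 1 ≤ e → 0 ≤ d →
      A e d * (hirzX1 + algebraMap ℂ HirzCohomology ((e : ℂ) * h)) ^ 2
        = A (e - 1) d *
            ((hirzX4 + algebraMap ℂ HirzCohomology ((d : ℂ) * h))
              - (hirzX1 + algebraMap ℂ HirzCohomology (((e : ℂ) - 1) * h))) ∧
      A (e - 1) d *
          ((hirzX4 + algebraMap ℂ HirzCohomology ((d : ℂ) * h))
            - (hirzX1 + algebraMap ℂ HirzCohomology (((e : ℂ) - 1) * h)))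
        = A (e - 1) d *
            (hirzX2 + algebraMap ℂ HirzCohomology (((d : ℂ) - (e : ℂ) + 1) * h)) := by
    intro e d he hd
    lift d to ℕ using hd
    obtain ⟨m, rfl⟩ : ∃ m : ℕ, e = (m : ℤ) + 1 := ⟨(e - 1).toNat, by omega⟩
    rw [show ((((d : ℕ) : ℤ)) : ℂ) = ((d : ℕ) : ℂ) by push_cast; ring]
    rw [show (m : ℤ) + 1 - 1 = (m : ℤ) by ring,
      show ((((m : ℤ) + 1 : ℤ)) : ℂ) = (m : ℂ) + 1 by push_cast; ring,
      show (((m : ℂ) + 1) - 1) * h = (m : ℂ) * h by ring,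
      show ((d : ℂ) - ((m : ℂ) + 1) + 1) * h = ((d : ℂ) - (m : ℂ)) * h by ring]
    have hmul : (hirzX4 + algebraMap ℂ HirzCohomology ((d : ℂ) * h))
        - (hirzX1 + algebraMap ℂ HirzCohomology ((m : ℂ) * h))
        = hirzX2 + algebraMap ℂ HirzCohomology (((d : ℂ) - (m : ℂ)) * h) := by
      rw [show hirzX2 = hirzX4 - hirzX1 from rfl,
        show ((d : ℂ) - (m : ℂ)) * h = (d : ℂ) * h - (m : ℂ) * h by ring, map_sub]
      ring
    refine ⟨?_, by rw [hmul]⟩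
    rw [hmul]
    have hk := key m d
    rw [show ((m + 1 : ℕ) : ℤ) = (m : ℤ) + 1 by push_cast; ring] at hk
    exact hk
  refine ⟨?_, keyInt⟩
  -- the power series identity, coefficientwise
  apply MvPowerSeries.ext; intro s
  classical
  have hX : ∀ F : MvPowerSeries (Fin 2) HirzCohomology,
      MvPowerSeries.coeff s (MvPowerSeries.X 0 * F)
        = if Finsupp.single (0 : Fin 2) 1 ≤ s then
            MvPowerSeries.coeff (s - Finsupp.single 0 1) F else 0 := by
    intro F
    rw [MvPowerSeries.X_def, MvPowerSeries.coeff_monomial_mul]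
    simp only [one_mul]
  rw [map_sub, hX, hX]
  by_cases hs : Finsupp.single (0 : Fin 2) 1 ≤ s
  · rw [if_pos hs, if_pos hs]
    simp only [hE1, hE2, hJ]
    have h0 : 1 ≤ s 0 := Finsupp.single_le_iff.mp hs
    have e0 : (s - Finsupp.single 0 1 : Fin 2 →₀ ℕ) 0 = s 0 - 1 := by
      rw [Finsupp.tsub_apply, Finsupp.single_eq_same]
    have e1 : (s - Finsupp.single 0 1 : Fin 2 →₀ ℕ) 1 = s 1 := by
      rw [Finsupp.tsub_apply, Finsupp.single_eq_of_ne (by decide), tsub_zero]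
    rw [e0, e1]
    have hk := (keyInt (s 0) (s 1) (by exact_mod_cast h0) (Int.natCast_nonneg _)).1
    rw [show (((s 0 : ℕ) : ℤ) : ℂ) = ((s 0 : ℕ) : ℂ) by push_cast; ring,
      show (((s 1 : ℕ) : ℤ) : ℂ) = ((s 1 : ℕ) : ℂ) by push_cast; ring] at hk
    rw [show ((s 0 - 1 : ℕ) : ℤ) = ((s 0 : ℕ) : ℤ) - 1 by
        rw [Nat.cast_sub h0]; norm_num,
      show ((s 0 - 1 : ℕ) : ℂ) = ((s 0 : ℕ) : ℂ) - 1 by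
        rw [Nat.cast_sub h0]; norm_num]
    linear_combination hk
  · rw [if_neg hs, if_neg hs]
    simp only [hE1, hJ]
    have h0 : s 0 = 0 := by
      by_contra hne
      exact hs (Finsupp.single_le_iff.mpr (by omega))
    rw [h0, Nat.cast_zero, zero_mul, map_zero, add_zero, ← mul_assoc, ← sq, hirzX1_sq,
      zero_mul, sub_zero]
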